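/- Assume in addition λ ≥ T² and let ε > 0. Then for every t ∈ (0,T) the function t ↦ θ_ε(t)^{−2} φ(t)^{−2} is differentiable at t and |d/dt (θ_ε(t)^{−2} φ(t)^{−2})| ≤ (2 exp(2 μ M) + 1) · λ · T · θ_ε(t)^{−2}. (The paper's weight estimate (B010) on the time derivative of θ_ε^{−2} φ^{−2}, with explicit constant.) -/

import Mathlib

set_option maxHeartbeats 1600000


/-- For `λ ≥ T²` and `ε > 0`, the function `t ↦ θ_ε(t)⁻² φ(t)⁻²` is differentiable on
`(0,T)` with `|(θ_ε⁻²φ⁻²)′(t)| ≤ (2 exp(2 μ M) + 1) · λ · T · θ_ε(t)⁻²`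
(paper's weight estimate (B010), explicit constant). -/
theorem carleman_regularized_weight_deriv_bound
    (T μ lam M c : ℝ) (hT : 0 < T) (hμ : 1 ≤ μ) (hlam : 1 ≤ lam)
    (hM : 0 < M) (hc0 : 0 ≤ c) (hcM : c ≤ M)
    (hlamT : T ^ 2 ≤ lam)
    (φ : ℝ → ℝ) (αε θε : ℝ → ℝ → ℝ)
    (hφ : ∀ t, φ t = Real.exp (μ * c) / (t * (T - t)))
    (hαε : ∀ ε t, αε ε t = (Real.exp (μ * c) - Real.exp (2 * μ * M)) / ((t + ε) * (T - t + ε)))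
    (hθε : ∀ ε t, θε ε t = Real.exp (lam * αε ε t)) :
    ∀ ε > (0 : ℝ), ∀ t ∈ Set.Ioo (0 : ℝ) T,
      DifferentiableAt ℝ (fun s => (θε ε s ^ 2)⁻¹ * (φ s ^ 2)⁻¹) t ∧
        |deriv (fun s => (θε ε s ^ 2)⁻¹ * (φ s ^ 2)⁻¹) t| ≤
          (2 * Real.exp (2 * μ * M) + 1) * lam * T * (θε ε t ^ 2)⁻¹ := by
  intro ε hε t ht
  obtain ⟨ht0, htT⟩ := ht
  set A := Real.exp (μ * c) with hA
  set B := Real.exp (2 * μ * M) with hB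
  have hA0 : (0:ℝ) < A := Real.exp_pos _
  have hA1 : (1:ℝ) ≤ A := Real.one_le_exp (by nlinarith)
  have hB1 : (1:ℝ) ≤ B := Real.one_le_exp (by nlinarith)
  have hAB : A ≤ B := Real.exp_le_exp.2 (by nlinarith)
  have hlam0 : (0:ℝ) < lam := by linarith
  have hP : (0:ℝ) < t * (T - t) := by nlinarith
  have hQ : (0:ℝ) < (t + ε) * (T - t + ε) := by nlinarith
  have hQne : (t + ε) * (T - t + ε) ≠ 0 := ne_of_gt hQ
  have hPQ : t * (T - t) ≤ (t + ε) * (T - t + ε) := by nlinarith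
  -- helper: (exp x)^2⁻¹ = exp(-(2x))
  have hsq : ∀ x : ℝ, (Real.exp x ^ 2)⁻¹ = Real.exp (-(2 * x)) := by
    intro x
    rw [sq, ← Real.exp_add, ← Real.exp_neg]
    congr 1; ring
  -- rewrite the function
  have hfun : (fun s => (θε ε s ^ 2)⁻¹ * (φ s ^ 2)⁻¹)
      = fun s => Real.exp (-(2 * (lam * ((A - B) / ((s + ε) * (T - s + ε))))))
          * ((s * (T - s)) ^ 2 / A ^ 2) := by
    funext s
    rw [hθε, hαε, hφ, hsq, div_pow, inv_div]
  have hθt : (θε ε t ^ 2)⁻¹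
      = Real.exp (-(2 * (lam * ((A - B) / ((t + ε) * (T - t + ε)))))) := by
    rw [hθε, hαε, hsq]
  set D := T - 2 * t with hD
  set P := t * (T - t) with hPdef
  set Q := (t + ε) * (T - t + ε) with hQdef
  -- derivative of Q(s)
  have hQd : HasDerivAt (fun s : ℝ => (s + ε) * (T - s + ε)) D t := by
    have h1 : HasDerivAt (fun s : ℝ => s + ε) 1 t := (hasDerivAt_id t).add_const ε
    have h2 : HasDerivAt (fun s : ℝ => T - s + ε) (-1) t := by
      simpa using ((hasDerivAt_id t).const_sub T).add_const ε
    have h3 := h1.mul h2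
    refine h3.congr_deriv ?_
    rw [hD]; ring
  -- derivative of the quotient
  have hquot : HasDerivAt (fun s => (A - B) / ((s + ε) * (T - s + ε)))
      ((0 * Q - (A - B) * D) / Q ^ 2) t := (hasDerivAt_const t (A - B)).div hQd hQne
  -- derivative of the exponent
  have hu : HasDerivAt (fun s => -(2 * (lam * ((A - B) / ((s + ε) * (T - s + ε))))))
      (-(2 * (lam * ((0 * Q - (A - B) * D) / Q ^ 2)))) t :=
    ((hquot.const_mul lam).const_mul 2).neg
  -- derivative of the polynomial part
  have hPd : HasDerivAt (fun s : ℝ => (s * (T - s)) ^ 2 / A ^ 2)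
      (2 * P * D / A ^ 2) t := by
    have h1 : HasDerivAt (fun s : ℝ => s * (T - s)) D t := by
      have h2 := (hasDerivAt_id t).mul ((hasDerivAt_id t).const_sub T)
      refine h2.congr_deriv ?_
      rw [hD]; simp only [id_eq]; ring
    have h3 := (h1.pow 2).div_const (A ^ 2)
    refine h3.congr_deriv ?_
    rw [hPdef]; norm_num
  set E := Real.exp (-(2 * (lam * ((A - B) / Q)))) with hE
  have hEpos : (0:ℝ) < E := Real.exp_pos _
  have hF : HasDerivAt
      (fun s => Real.exp (-(2 * (lam * ((A - B) / ((s + ε) * (T - s + ε))))))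
        * ((s * (T - s)) ^ 2 / A ^ 2))
      ((E * -(2 * (lam * ((0 * Q - (A - B) * D) / Q ^ 2)))) * (P ^ 2 / A ^ 2)
        + E * (2 * P * D / A ^ 2)) t := hu.exp.mul hPd
  constructor
  · rw [hfun]; exact hF.differentiableAt
  -- key bounds
  have hDT : |D| ≤ T := abs_le.mpr ⟨by simp [hD]; linarith, by simp [hD]; linarith⟩
  have hPT : P ≤ T ^ 2 / 4 := by
    simp only [hPdef]; nlinarith [sq_nonneg (T - 2 * t)]
  have hfrac : P ^ 2 / Q ^ 2 / A ^ 2 ≤ 1 := by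
    rw [div_div, div_le_one (by positivity)]
    have h1 : P ^ 2 ≤ Q ^ 2 := pow_le_pow_left₀ hP.le hPQ 2
    have h2 : Q ^ 2 ≤ Q ^ 2 * A ^ 2 :=
      le_mul_of_one_le_right (sq_nonneg Q) (one_le_pow₀ hA1)
    linarith
  have hfrac0 : (0:ℝ) ≤ P ^ 2 / Q ^ 2 / A ^ 2 := by positivity
  have hcoef : |2 * lam * (A - B) * D| ≤ 2 * B * lam * T := by
    have h1 : |2 * lam * (A - B) * D| = (2 * lam * (B - A)) * |D| := by
      rw [abs_mul, abs_of_nonpos (by nlinarith [mul_nonneg hlam0.le (sub_nonneg.2 hAB)] : 2 * lam * (A - B) ≤ 0)]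
      ring
    rw [h1]
    have h2 : (B - A) * |D| ≤ B * T :=
      mul_le_mul (by linarith) hDT (abs_nonneg D) (by linarith)
    calc (2 * lam * (B - A)) * |D| = 2 * lam * ((B - A) * |D|) := by ring
      _ ≤ 2 * lam * (B * T) := mul_le_mul_of_nonneg_left h2 (by positivity)
      _ = 2 * B * lam * T := by ring
  set X := (2 * lam * (A - B) * D) * (P ^ 2 / Q ^ 2 / A ^ 2) with hX
  set Y := (2 * P * D) / A ^ 2 with hY
  have hXb : |X| ≤ 2 * B * lam * T := by
    rw [hX, abs_mul, abs_of_nonneg hfrac0]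
    calc |2 * lam * (A - B) * D| * (P ^ 2 / Q ^ 2 / A ^ 2)
        ≤ (2 * B * lam * T) * 1 :=
          mul_le_mul hcoef hfrac hfrac0 (by positivity)
      _ = 2 * B * lam * T := by ring
  have hYb : |Y| ≤ lam * T := by
    have h1 : |Y| = 2 * P * |D| / A ^ 2 := by
      rw [hY, abs_div, abs_mul, abs_of_nonneg (by linarith : (0:ℝ) ≤ 2 * P),
        abs_of_nonneg (by positivity : (0:ℝ) ≤ A ^ 2)]
    rw [h1]
    have hA2 : (1:ℝ) ≤ A ^ 2 := one_le_pow₀ hA1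
    have h2 : 2 * P * |D| / A ^ 2 ≤ 2 * P * |D| := by
      apply div_le_self (by positivity) hA2
    have h3 : 2 * P * |D| ≤ 2 * (T ^ 2 / 4) * T := by
      apply mul_le_mul (by linarith) hDT (abs_nonneg D) (by positivity)
    have h4 : T ^ 3 ≤ lam * T := by
      calc T ^ 3 = T ^ 2 * T := by ring
        _ ≤ lam * T := mul_le_mul_of_nonneg_right hlamT hT.le
    calc 2 * P * |D| / A ^ 2 ≤ 2 * P * |D| := h2
      _ ≤ 2 * (T ^ 2 / 4) * T := h3
      _ = T ^ 3 / 2 := by ring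
      _ ≤ lam * T / 2 := by linarith
      _ ≤ lam * T := by linarith [mul_pos hlam0 hT]
  rw [hfun, hF.deriv, hθt]
  have hsum : (E * -(2 * (lam * ((0 * Q - (A - B) * D) / Q ^ 2)))) * (P ^ 2 / A ^ 2)
      + E * (2 * P * D / A ^ 2) = E * (X + Y) := by
    rw [hX, hY]; ring
  rw [hsum, abs_mul, abs_of_pos hEpos]
  calc E * |X + Y| ≤ E * ((2 * B + 1) * lam * T) := by
        have := (abs_add_le X Y).trans (by linarith : |X| + |Y| ≤ (2 * B + 1) * lam * T)
        exact mul_le_mul_of_nonneg_left this hEpos.le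
    _ = (2 * B + 1) * lam * T * E := by ring
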